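/- Let 0 < ε ≤ 1. Let A be the matrix obtained by stacking a matrix D on top of a matrix B (so B is a suffix of the rows of A), and let C be any matrix with the same number of columns as A. Write A∘C and B∘C for the matrices obtained by appending the rows of C below A and below B, respectively. If ‖B‖_F ≥ (1−ε²/4)·‖A‖_F, then ‖B∘C‖_F ≥ (1−ε)·‖A∘C‖_F. That is, the Frobenius norm is an (ε, ε²/4)-smooth function. -/
import Mathlib


open Matrix

/-- The Frobenius norm of a real matrix. -/
noncomputable def frobNorm {α β : Type*} [Fintype α] [Fintype β]
    (M : Matrix α β ℝ) : ℝ :=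
  Real.sqrt (∑ i, ∑ j, (M i j) ^ 2)

lemma frobNorm_fromRows {α₁ α₂ β : Type*} [Fintype α₁] [Fintype α₂] [Fintype β]
    (M : Matrix α₁ β ℝ) (N : Matrix α₂ β ℝ) :
    frobNorm (Matrix.fromRows M N)
      = Real.sqrt ((∑ i, ∑ j, (M i j) ^ 2) + (∑ i, ∑ j, (N i j) ^ 2)) := by
  unfold frobNorm
  rw [Fintype.sum_sum_type]
  rfl

/-- **The Frobenius norm is `(ε, ε²/4)`-smooth.**
With `A = D∘B` (so `B` is a suffix of the rows of `A`) and any later block `C`: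
if `‖B‖_F ≥ (1 - ε²/4)‖A‖_F` then `‖B∘C‖_F ≥ (1-ε)‖A∘C‖_F`. -/
theorem frobenius_norm_smooth (p q r n : ℕ) (ε : ℝ) (hε0 : 0 < ε) (hε1 : ε ≤ 1)
    (D : Matrix (Fin p) (Fin n) ℝ) (B : Matrix (Fin q) (Fin n) ℝ)
    (C : Matrix (Fin r) (Fin n) ℝ)
    (h : (1 - ε ^ 2 / 4) * frobNorm (Matrix.fromRows D B) ≤ frobNorm B) :
    (1 - ε) * frobNorm (Matrix.fromRows (Matrix.fromRows D B) C) ≤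
      frobNorm (Matrix.fromRows B C) := by
  set sD := ∑ i, ∑ j, (D i j) ^ 2 with hsD
  set sB := ∑ i, ∑ j, (B i j) ^ 2 with hsB
  set sC := ∑ i, ∑ j, (C i j) ^ 2 with hsC
  have hD0 : 0 ≤ sD := Finset.sum_nonneg fun i _ => Finset.sum_nonneg fun j _ => sq_nonneg _
  have hB0 : 0 ≤ sB := Finset.sum_nonneg fun i _ => Finset.sum_nonneg fun j _ => sq_nonneg _
  have hC0 : 0 ≤ sC := Finset.sum_nonneg fun i _ => Finset.sum_nonneg fun j _ => sq_nonneg _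
  have hA : frobNorm (Matrix.fromRows D B) = Real.sqrt (sD + sB) := frobNorm_fromRows D B
  have hB : frobNorm B = Real.sqrt sB := rfl
  have hAC : frobNorm (Matrix.fromRows (Matrix.fromRows D B) C)
      = Real.sqrt ((sD + sB) + sC) := by
    unfold frobNorm
    rw [Fintype.sum_sum_type, Fintype.sum_sum_type]
    rfl
  have hBC : frobNorm (Matrix.fromRows B C) = Real.sqrt (sB + sC) := frobNorm_fromRows B C
  rw [hA, hB] at h
  rw [hAC, hBC]
  -- square the hypothesis
  have hβ : 0 ≤ 1 - ε ^ 2 / 4 := by nlinarith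
  have hα : 0 ≤ 1 - ε := by linarith
  have hsq : (1 - ε ^ 2 / 4) ^ 2 * (sD + sB) ≤ sB := by
    have h1 : ((1 - ε ^ 2 / 4) * Real.sqrt (sD + sB)) ^ 2 ≤ (Real.sqrt sB) ^ 2 := by
      apply sq_le_sq' _ h
      have : 0 ≤ (1 - ε ^ 2 / 4) * Real.sqrt (sD + sB) :=
        mul_nonneg hβ (Real.sqrt_nonneg _)
      linarith
    rw [mul_pow, Real.sq_sqrt (by linarith), Real.sq_sqrt hB0] at h1
    exact h1
  -- target via squares
  have h3 : (1 - ε) ^ 2 ≤ (1 - ε ^ 2 / 4) ^ 2 := by nlinarith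
  have h4 : (1 - ε) ^ 2 ≤ 1 := by nlinarith
  have key : (1 - ε) ^ 2 * ((sD + sB) + sC) ≤ sB + sC := by
    nlinarith [mul_le_mul_of_nonneg_right h3 (add_nonneg hD0 hB0),
      mul_le_mul_of_nonneg_right h4 hC0]
  have h2 : (1 - ε) * Real.sqrt ((sD + sB) + sC)
      = Real.sqrt ((1 - ε) ^ 2 * ((sD + sB) + sC)) := by
    rw [Real.sqrt_mul (sq_nonneg _), Real.sqrt_sq hα]
  rw [h2]
  exact Real.sqrt_le_sqrt key
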